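/- arXiv:1508.00493 — 2 statements merged into one kernel-verified Lean document; each statement's English description precedes it below -/
import Mathlib

section
/- The map x_0 ↦ x_0x_2, x_1 ↦ x_1x_2 extends to a group isomorphism from Thompson's group F onto its subgroup G = ⟨x_0x_2, x_1x_2⟩; in particular, G is isomorphic to F. -/
set_option maxHeartbeats 1000000

noncomputable section

/-- The unit interval `[0,1]` as a type. -/
abbrev I : Type := Set.Icc (0:ℝ) 1

/-- The underlying function of the generator `x₀` of Thompson's group `F`. -/
def x0fun (t : ℝ) : ℝ := if t ≤ 1/4 then 2*t else if t ≤ 1/2 then t + 1/4 else t/2 + 1/2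

/-- The inverse of `x0fun`. -/
def x0inv (t : ℝ) : ℝ := if t ≤ 1/2 then t/2 else if t ≤ 3/4 then t - 1/4 else 2*t - 1

/-- The underlying function of the generator `x₁` of Thompson's group `F`. -/
def x1fun (t : ℝ) : ℝ :=
  if t ≤ 1/2 then t else if t ≤ 5/8 then 2*t - 1/2 else if t ≤ 3/4 then t + 1/8 else t/2 + 1/2

/-- The inverse of `x1fun`. -/
def x1inv (t : ℝ) : ℝ :=
  if t ≤ 1/2 then t else if t ≤ 3/4 then t/2 + 1/4 else if t ≤ 7/8 then t - 1/8 else 2*t - 1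

/-- The generator `x₀` of Thompson's group `F`, as a bijection of `[0,1]`. -/
def x₀ : Equiv.Perm I where
  toFun t := ⟨x0fun t.1, by
    obtain ⟨h0, h1⟩ := Set.mem_Icc.mp t.2
    simp only [Set.mem_Icc, x0fun]
    split_ifs <;> constructor <;> linarith⟩
  invFun t := ⟨x0inv t.1, by
    obtain ⟨h0, h1⟩ := Set.mem_Icc.mp t.2
    simp only [Set.mem_Icc, x0inv]
    split_ifs <;> constructor <;> linarith⟩
  left_inv t := by
    obtain ⟨h0, h1⟩ := Set.mem_Icc.mp t.2
    apply Subtype.ext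
    show x0inv (x0fun t.1) = t.1
    simp only [x0fun, x0inv]
    split_ifs <;> linarith
  right_inv t := by
    obtain ⟨h0, h1⟩ := Set.mem_Icc.mp t.2
    apply Subtype.ext
    show x0fun (x0inv t.1) = t.1
    simp only [x0fun, x0inv]
    split_ifs <;> linarith

/-- The generator `x₁` of Thompson's group `F`, as a bijection of `[0,1]`. -/
def x₁ : Equiv.Perm I where
  toFun t := ⟨x1fun t.1, by
    obtain ⟨h0, h1⟩ := Set.mem_Icc.mp t.2
    simp only [Set.mem_Icc, x1fun]
    split_ifs <;> constructor <;> linarith⟩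
  invFun t := ⟨x1inv t.1, by
    obtain ⟨h0, h1⟩ := Set.mem_Icc.mp t.2
    simp only [Set.mem_Icc, x1inv]
    split_ifs <;> constructor <;> linarith⟩
  left_inv t := by
    obtain ⟨h0, h1⟩ := Set.mem_Icc.mp t.2
    apply Subtype.ext
    show x1inv (x1fun t.1) = t.1
    simp only [x1fun, x1inv]
    split_ifs <;> linarith
  right_inv t := by
    obtain ⟨h0, h1⟩ := Set.mem_Icc.mp t.2
    apply Subtype.ext
    show x1fun (x1inv t.1) = t.1
    simp only [x1fun, x1inv]
    split_ifs <;> linarith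

/-- Composition in Thompson's group `F` is from left to right: the product `f·g` in the paper
is the function `t ↦ g (f t)`.  In Lean, `Equiv.Perm` multiplication is composition from right
to left: `(f * g) t = f (g t)`.  Hence a paper product `a₁ a₂ ⋯ aₙ` corresponds to the Lean
product `aₙ * ⋯ * a₂ * a₁`.

`x i` is the standard generator `x_i` of Thompson's group `F`: here `x_0, x_1` are the explicit
piecewise-linear maps, and for `i ≥ 1`, `x_{i+1} = x_0^{-i} x_1 x_0^{i}` (left-to-right
composition), which in Lean's convention is `x₀ ^ i * x₁ * (x₀ ^ i)⁻¹`. -/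
def x (i : ℕ) : Equiv.Perm I := if i = 0 then x₀ else x₀ ^ (i-1) * x₁ * (x₀ ^ (i-1))⁻¹

/-- Thompson's group `F`, realized as the group of increasing piecewise-linear homeomorphisms of
`[0,1]` with dyadic breakpoints and slopes powers of 2; it is generated by `x_0` and `x_1`. -/
def F : Subgroup (Equiv.Perm I) := Subgroup.closure {x 0, x 1}

/-- The subgroup `G = ⟨x_0x_2, x_1x_2⟩` of `F` (products written left-to-right, so
`x_0x_2` is the Lean element `x 2 * x 0`). -/
def G : Subgroup (Equiv.Perm I) := Subgroup.closure {x 2 * x 0, x 2 * x 1}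

/-- Jones' subgroup `F⃗ = ⟨x_0x_1, x_1x_2, x_2x_3⟩` of `F` (products written left-to-right). -/
def JonesF : Subgroup (Equiv.Perm I) := Subgroup.closure {x 1 * x 0, x 2 * x 1, x 3 * x 2}

lemma x_mem_F (i : ℕ) : x i ∈ F := by
  have h0 : x 0 ∈ F := Subgroup.subset_closure (by simp)
  have h1 : x 1 ∈ F := Subgroup.subset_closure (by simp)
  have hx0 : x₀ ∈ F := by simpa [x] using h0
  have hx1 : x₁ ∈ F := by simpa [x] using h1
  rcases Nat.eq_zero_or_pos i with h | h
  · subst h; exact h0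
  · have : x i = x₀ ^ (i-1) * x₁ * (x₀ ^ (i-1))⁻¹ := by
      simp [x, Nat.pos_iff_ne_zero.mp h]
    rw [this]
    exact mul_mem (mul_mem (pow_mem hx0 _) hx1) (inv_mem (pow_mem hx0 _))

lemma y0_mem_G : x 2 * x 0 ∈ G := Subgroup.subset_closure (by simp)

lemma y1_mem_G : x 2 * x 1 ∈ G := Subgroup.subset_closure (by simp)

/-- The length `|w|` of an element of `F`: the minimal `n` such that `w` is a product of `n`
elements of `{x_i^{±1} : i ≥ 0}`.  This equals the length of the normal form of `w`. -/
def len (w : Equiv.Perm I) : ℕ :=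
  sInf {n | ∃ l : List (Equiv.Perm I), l.length = n ∧
    (∀ a ∈ l, ∃ i : ℕ, a = x i ∨ a = (x i)⁻¹) ∧ l.prod = w}

/-- The element of `F` given by the positive word `x_{i_1} x_{i_2} ⋯ x_{i_n}` (composition from
left to right), where `l = [i_1, i_2, …, i_n]`.  Since Lean's multiplication of permutations is
composition from right to left, this is the Lean product of the reversed list of letters. -/
def pp (l : List ℕ) : Equiv.Perm I := ((l.map x).reverse).prod

/-- `l = [i_1, …, i_n]` encodes a *block*: a positive normal form `x_{i_1}⋯x_{i_n}`
(so `i_1 ≤ ⋯ ≤ i_n`) with `i_1 ≠ i_n` and `i_j < i_1 + j` for all `j = 1, …, n`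
(here with 0-based indexing: `l[k] < l[0] + k + 1`). -/
def IsBlock (l : List ℕ) : Prop :=
  l ≠ [] ∧ l.Pairwise (· ≤ ·) ∧ l.headI ≠ l.getLastD 0 ∧
    ∀ k < l.length, l.getD k 0 < l.headI + k + 1

/-- The double coset `F⃗ a F⃗` of Jones' subgroup.  (As a set this does not depend on the
composition convention, since `u, v` range over all of `F⃗`.) -/
def dCoset (a : Equiv.Perm I) : Set (Equiv.Perm I) :=
  {w | ∃ u ∈ JonesF, ∃ v ∈ JonesF, w = v * a * u}

/-- A real number is dyadic if it has the form `a / 2^n` with `a, n` natural numbers. -/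
def IsDyadic (α : ℝ) : Prop := ∃ (a : ℕ) (n : ℕ), α = a / 2^n

/-- The subgroup of all permutations fixing every point of `U`. -/
def fixing (U : Set ℝ) : Subgroup (Equiv.Perm I) where
  carrier := {g | ∀ t : I, (t : ℝ) ∈ U → g t = t}
  one_mem' := fun _ _ => rfl
  mul_mem' := by
    intro a b ha hb t ht
    simp only [Equiv.Perm.mul_apply]
    rw [hb t ht, ha t ht]
  inv_mem' := by
    intro a ha t ht
    conv_lhs => rw [← ha t ht]
    exact Equiv.symm_apply_apply a t

/-- `H_U`: the stabilizer in `F` of the finite set `U ⊂ (0,1)`, i.e. the subgroup of all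
elements of `F` fixing every point of `U`. -/
def HU (U : Set ℝ) : Subgroup (Equiv.Perm I) := F ⊓ fixing U

def nb4 (u : ℝ) : ℕ := (-Int.log 4 u - 2).toNat
def nb2 (v : ℝ) : ℕ := (-Int.log 2 v - 3).toNat

def hb (u : ℝ) : ℝ :=
  if 1 ≤ 8 * ((2:ℝ) ^ nb4 u)^2 * u then 1 / (8 * (2:ℝ) ^ nb4 u) + (2:ℝ) ^ nb4 u * u / 2
  else 1 / (16 * (2:ℝ) ^ nb4 u) + (2:ℝ) ^ nb4 u * u

def hbinv (v : ℝ) : ℝ :=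
  if 3 ≤ 16 * (2:ℝ) ^ nb2 v * v then 2 * v / (2:ℝ) ^ nb2 v - 1 / (4 * ((2:ℝ) ^ nb2 v)^2)
  else v / (2:ℝ) ^ nb2 v - 1 / (16 * ((2:ℝ) ^ nb2 v)^2)

lemma e4a (k : ℕ) : ((4:ℕ):ℝ) ^ (-(k:ℤ) - 2) = 1 / (16 * (4:ℝ) ^ k) := by
  rw [show -(k:ℤ) - 2 = -((k + 2 : ℕ) : ℤ) by push_cast; ring, zpow_neg, zpow_natCast]
  rw [pow_add]; push_cast; rw [one_div, mul_inv]; norm_num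

lemma e4b (k : ℕ) : ((4:ℕ):ℝ) ^ (-(k:ℤ) - 1) = 1 / (4 * (4:ℝ) ^ k) := by
  rw [show -(k:ℤ) - 1 = -((k + 1 : ℕ) : ℤ) by push_cast; ring, zpow_neg, zpow_natCast]
  rw [pow_add]; push_cast; rw [one_div, mul_inv]; norm_num

lemma e2a (k : ℕ) : ((2:ℕ):ℝ) ^ (-(k:ℤ) - 3) = 1 / (8 * (2:ℝ) ^ k) := by
  rw [show -(k:ℤ) - 3 = -((k + 3 : ℕ) : ℤ) by push_cast; ring, zpow_neg, zpow_natCast]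
  rw [pow_add]; push_cast; rw [one_div, mul_inv]; norm_num

lemma e2b (k : ℕ) : ((2:ℕ):ℝ) ^ (-(k:ℤ) - 2) = 1 / (4 * (2:ℝ) ^ k) := by
  rw [show -(k:ℤ) - 2 = -((k + 2 : ℕ) : ℤ) by push_cast; ring, zpow_neg, zpow_natCast]
  rw [pow_add]; push_cast; rw [one_div, mul_inv]; norm_num

lemma pow_two_sq (n : ℕ) : ((2:ℝ)^n)^2 = (4:ℝ)^n := by
  rw [show (4:ℝ) = 2^2 by norm_num, ← pow_mul, show n*2 = 2*n from Nat.mul_comm n 2, pow_mul]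

lemma nb4_spec {u : ℝ} (h0 : 0 < u) (h1 : u < 1/4) :
    1 ≤ 16 * ((2:ℝ) ^ nb4 u)^2 * u ∧ 4 * ((2:ℝ) ^ nb4 u)^2 * u < 1 := by
  have hb4 : (1:ℕ) < 4 := by norm_num
  have hlog : Int.log 4 u < -1 := by
    rw [← Int.lt_zpow_iff_log_lt hb4 h0]
    have : ((4:ℕ):ℝ) ^ (-1:ℤ) = 1/4 := by norm_num
    rw [this]; exact h1
  have hnk : (nb4 u : ℤ) = -Int.log 4 u - 2 := Int.toNat_of_nonneg (by omega)
  have hlogeq : Int.log 4 u = -(nb4 u : ℤ) - 2 := by omega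
  have hlow := Int.zpow_log_le_self hb4 h0
  have hup := Int.lt_zpow_succ_log_self hb4 u
  rw [hlogeq, e4a] at hlow
  rw [hlogeq, show -(nb4 u:ℤ) - 2 + 1 = -(nb4 u:ℤ) - 1 by ring, e4b] at hup
  have hp : (0:ℝ) < (4:ℝ) ^ nb4 u := by positivity
  rw [div_le_iff₀ (by positivity)] at hlow
  rw [lt_div_iff₀ (by positivity)] at hup
  rw [pow_two_sq]
  constructor <;> linarith

lemma nb4_eq {u : ℝ} {k : ℕ} (hl : 1 ≤ 16 * ((2:ℝ)^k)^2 * u)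
    (hu : 4 * ((2:ℝ)^k)^2 * u < 1) : nb4 u = k := by
  have hb4 : (1:ℕ) < 4 := by norm_num
  rw [pow_two_sq] at hl hu
  have hp : (0:ℝ) < (4:ℝ) ^ k := by positivity
  have h0 : 0 < u := by nlinarith
  have hlow : ((4:ℕ):ℝ) ^ (-(k:ℤ) - 2) ≤ u := by
    rw [e4a, div_le_iff₀ (by positivity)]; linarith
  have hup : u < ((4:ℕ):ℝ) ^ (-(k:ℤ) - 1) := by
    rw [e4b, lt_div_iff₀ (by positivity)]; linarith
  have h1 := (Int.zpow_le_iff_le_log hb4 h0).mp hlow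
  have h2 := (Int.lt_zpow_iff_log_lt hb4 h0).mp hup
  unfold nb4; omega

lemma nb2_spec {v : ℝ} (h0 : 0 < v) (h1 : v < 1/4) :
    1 ≤ 8 * (2:ℝ) ^ nb2 v * v ∧ 4 * (2:ℝ) ^ nb2 v * v < 1 := by
  have hb2 : (1:ℕ) < 2 := by norm_num
  have hlog : Int.log 2 v < -2 := by
    rw [← Int.lt_zpow_iff_log_lt hb2 h0]
    have : ((2:ℕ):ℝ) ^ (-2:ℤ) = 1/4 := by norm_num
    rw [this]; exact h1
  have hnk : (nb2 v : ℤ) = -Int.log 2 v - 3 := Int.toNat_of_nonneg (by omega)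
  have hlogeq : Int.log 2 v = -(nb2 v : ℤ) - 3 := by omega
  have hlow := Int.zpow_log_le_self hb2 h0
  have hup := Int.lt_zpow_succ_log_self hb2 v
  rw [hlogeq, e2a] at hlow
  rw [hlogeq, show -(nb2 v:ℤ) - 3 + 1 = -(nb2 v:ℤ) - 2 by ring, e2b] at hup
  have hp : (0:ℝ) < (2:ℝ) ^ nb2 v := by positivity
  rw [div_le_iff₀ (by positivity)] at hlow
  rw [lt_div_iff₀ (by positivity)] at hup
  constructor <;> linarith

lemma nb2_eq {v : ℝ} {k : ℕ} (hl : 1 ≤ 8 * (2:ℝ)^k * v)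
    (hu : 4 * (2:ℝ)^k * v < 1) : nb2 v = k := by
  have hb2 : (1:ℕ) < 2 := by norm_num
  have hp : (0:ℝ) < (2:ℝ) ^ k := by positivity
  have h0 : 0 < v := by nlinarith
  have hlow : ((2:ℕ):ℝ) ^ (-(k:ℤ) - 3) ≤ v := by
    rw [e2a, div_le_iff₀ (by positivity)]; linarith
  have hup : v < ((2:ℕ):ℝ) ^ (-(k:ℤ) - 2) := by
    rw [e2b, lt_div_iff₀ (by positivity)]; linarith
  have h1 := (Int.zpow_le_iff_le_log hb2 h0).mp hlow
  have h2 := (Int.lt_zpow_iff_log_lt hb2 h0).mp hup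
  unfold nb2; omega

lemma hb_base_A {u : ℝ} (h1 : 1/8 ≤ u) (h2 : u < 1/4) : hb u = 1/8 + u/2 := by
  have hn : nb4 u = 0 := nb4_eq (k := 0) (by norm_num; linarith) (by norm_num; linarith)
  rw [hb, hn]
  rw [if_pos (by norm_num; linarith)]
  norm_num

lemma hb_base_B {u : ℝ} (h1 : 1/16 ≤ u) (h2 : u < 1/8) : hb u = 1/16 + u := by
  have hn : nb4 u = 0 := nb4_eq (k := 0) (by norm_num; linarith) (by norm_num; linarith)
  rw [hb, hn]
  rw [if_neg (by norm_num; linarith)]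
  norm_num

lemma hb_pos {u : ℝ} (h0 : 0 < u) (h1 : u < 1/4) : 0 < hb u := by
  have hP : (0:ℝ) < (2:ℝ) ^ nb4 u := by positivity
  rw [hb]; split_ifs <;> positivity

lemma hb_lt {u : ℝ} (h0 : 0 < u) (h1 : u < 1/4) : hb u < 1/4 := by
  obtain ⟨hl, hu⟩ := nb4_spec h0 h1
  set P := (2:ℝ) ^ nb4 u with hPdef
  have hP : (0:ℝ) < P := by positivity
  have hP1 : (1:ℝ) ≤ P := one_le_pow₀ (by norm_num)
  rw [hb, ← hPdef]
  split_ifs with h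
  · rw [div_add' _ _ _ (by positivity), div_lt_iff₀ (by positivity)]
    nlinarith
  · rw [div_add' _ _ _ (by positivity), div_lt_iff₀ (by positivity)]
    nlinarith

lemma hb_quarter {u : ℝ} (h0 : 0 < u) (h1 : u < 1/4) : hb (u/4) = hb u / 2 := by
  obtain ⟨hl, hu⟩ := nb4_spec h0 h1
  set n := nb4 u with hndef
  set P := (2:ℝ) ^ n with hPdef
  have hP : (0:ℝ) < P := by positivity
  have hP2 : (2:ℝ) ^ (n+1) = P * 2 := by rw [pow_succ, ← hPdef]
  have hn' : nb4 (u/4) = n + 1 := by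
    apply nb4_eq
    · rw [hP2]; nlinarith
    · rw [hP2]; nlinarith
  rw [hb, hn', hP2, hb, ← hndef, ← hPdef]
  clear_value P
  have hcond : (1 ≤ 8 * (P * 2)^2 * (u/4)) ↔ (1 ≤ 8 * P^2 * u) := by
    constructor <;> intro <;> nlinarith
  split_ifs with h1' h2' h2'
  · field_simp; ring
  · exact absurd (hcond.mp h1') h2'
  · exact absurd (hcond.mpr h2') h1'
  · field_simp; ring

lemma hbinv_hb {u : ℝ} (h0 : 0 < u) (h1 : u < 1/4) : hbinv (hb u) = u := by
  obtain ⟨hl, hu⟩ := nb4_spec h0 h1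
  set n := nb4 u with hndef
  set P := (2:ℝ) ^ n with hPdef
  have hP : (0:ℝ) < P := by positivity
  rw [hb, ← hndef, ← hPdef]
  split_ifs with h
  · have hk : nb2 (1 / (8*P) + P * u / 2) = n := by
      apply nb2_eq (k := n) <;> rw [← hPdef] <;>
        [skip; skip] <;>
        (have : 8 * P * (1 / (8*P) + P * u / 2) = 1 + 4 * P^2 * u := by field_simp; ring) <;>
        nlinarith
    rw [hbinv, hk, ← hPdef, if_pos ?hc]
    case hc =>
      have : 16 * P * (1 / (8*P) + P * u / 2) = 2 + 8 * P^2 * u := by field_simp; ring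
      nlinarith
    clear_value P
    field_simp
    ring
  · have hk : nb2 (1 / (16*P) + P * u) = n := by
      apply nb2_eq (k := n) <;> rw [← hPdef] <;>
        (have : 16 * P * (1 / (16*P) + P * u) = 1 + 16 * P^2 * u := by field_simp) <;>
        nlinarith
    rw [hbinv, hk, ← hPdef, if_neg ?hc]
    case hc =>
      have : 16 * P * (1 / (16*P) + P * u) = 1 + 16 * P^2 * u := by field_simp
      push_neg
      nlinarith
    clear_value P
    field_simp
    ring

lemma hbinv_pos {v : ℝ} (h0 : 0 < v) (h1 : v < 1/4) : 0 < hbinv v := by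
  obtain ⟨hl, hu⟩ := nb2_spec h0 h1
  set Q := (2:ℝ) ^ nb2 v with hQdef
  have hQ : (0:ℝ) < Q := by positivity
  rw [hbinv, ← hQdef]
  split_ifs with h
  · rw [sub_pos, div_lt_div_iff₀ (by positivity) (by positivity)]; nlinarith
  · rw [sub_pos, div_lt_div_iff₀ (by positivity) (by positivity)]; nlinarith

lemma hbinv_lt {v : ℝ} (h0 : 0 < v) (h1 : v < 1/4) : hbinv v < 1/4 := by
  obtain ⟨hl, hu⟩ := nb2_spec h0 h1
  set Q := (2:ℝ) ^ nb2 v with hQdef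
  have hQ : (0:ℝ) < Q := by positivity
  have hQ1 : (1:ℝ) ≤ Q := one_le_pow₀ (by norm_num)
  rw [hbinv, ← hQdef]
  split_ifs with h
  · rw [div_sub_div _ _ (by positivity) (by positivity), div_lt_iff₀ (by positivity)]
    nlinarith
  · rw [div_sub_div _ _ (by positivity) (by positivity), div_lt_iff₀ (by positivity)]
    nlinarith


lemma hb_hbinv {v : ℝ} (h0 : 0 < v) (h1 : v < 1/4) : hb (hbinv v) = v := by
  obtain ⟨hl, hu⟩ := nb2_spec h0 h1
  set m := nb2 v with hmdef
  set Q := (2:ℝ) ^ m with hQdef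
  have hQ : (0:ℝ) < Q := by positivity
  rw [hbinv, ← hmdef, ← hQdef]
  split_ifs with h
  · have hu4 : 4 * Q^2 * (2 * v / Q - 1 / (4 * Q^2)) = 8 * Q * v - 1 := by field_simp; ring
    have hk : nb4 (2 * v / Q - 1 / (4 * Q^2)) = m := by
      apply nb4_eq (k := m) <;> rw [← hQdef] <;> nlinarith
    rw [hb, hk, ← hQdef, if_pos (by nlinarith)]
    clear_value Q
    field_simp
    ring
  · have hu4 : 16 * Q^2 * (v / Q - 1 / (16 * Q^2)) = 16 * Q * v - 1 := by field_simp
    have hk : nb4 (v / Q - 1 / (16 * Q^2)) = m := by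
      apply nb4_eq (k := m) <;> rw [← hQdef] <;> nlinarith
    rw [hb, hk, ← hQdef, if_neg (by push_neg; nlinarith)]
    clear_value Q
    field_simp
    ring

def hfun (t : ℝ) : ℝ := if 3/4 < t ∧ t < 1 then 1 - hb (1 - t) else t
def hinvfun (t : ℝ) : ℝ := if 3/4 < t ∧ t < 1 then 1 - hbinv (1 - t) else t

lemma hfun_id {t : ℝ} (h : t ≤ 3/4 ∨ 1 ≤ t) : hfun t = t := by
  rw [hfun, if_neg]; rintro ⟨h1, h2⟩; rcases h with h | h <;> linarith

lemma hfun_br {t : ℝ} (h1 : 3/4 < t) (h2 : t < 1) : hfun t = 1 - hb (1 - t) := by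
  rw [hfun, if_pos ⟨h1, h2⟩]

lemma hfun_mem_br {t : ℝ} (h1 : 3/4 < t) (h2 : t < 1) : 3/4 < hfun t ∧ hfun t < 1 := by
  rw [hfun_br h1 h2]
  have := hb_pos (u := 1 - t) (by linarith) (by linarith)
  have := hb_lt (u := 1 - t) (by linarith) (by linarith)
  constructor <;> linarith

lemma hinvfun_hfun (t : ℝ) : hinvfun (hfun t) = t := by
  by_cases h : 3/4 < t ∧ t < 1
  · obtain ⟨h1, h2⟩ := h
    obtain ⟨m1, m2⟩ := hfun_mem_br h1 h2
    rw [hinvfun, if_pos ⟨m1, m2⟩, hfun_br h1 h2,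
      show (1:ℝ) - (1 - hb (1 - t)) = hb (1 - t) by ring,
      hbinv_hb (by linarith) (by linarith)]
    ring
  · rw [hfun, if_neg h, hinvfun, if_neg h]

lemma hinvfun_br {t : ℝ} (h1 : 3/4 < t) (h2 : t < 1) : hinvfun t = 1 - hbinv (1 - t) := by
  rw [hinvfun, if_pos ⟨h1, h2⟩]

lemma hinvfun_mem_br {t : ℝ} (h1 : 3/4 < t) (h2 : t < 1) : 3/4 < hinvfun t ∧ hinvfun t < 1 := by
  rw [hinvfun_br h1 h2]
  have := hbinv_pos (v := 1 - t) (by linarith) (by linarith)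
  have := hbinv_lt (v := 1 - t) (by linarith) (by linarith)
  constructor <;> linarith

lemma hfun_hinvfun (t : ℝ) : hfun (hinvfun t) = t := by
  by_cases h : 3/4 < t ∧ t < 1
  · obtain ⟨h1, h2⟩ := h
    obtain ⟨m1, m2⟩ := hinvfun_mem_br h1 h2
    rw [hfun, if_pos ⟨m1, m2⟩, hinvfun_br h1 h2,
      show (1:ℝ) - (1 - hbinv (1 - t)) = hbinv (1 - t) by ring,
      hb_hbinv (by linarith) (by linarith)]
    ring
  · rw [hinvfun, if_neg h, hfun, if_neg h]

lemma hfun_mem {t : ℝ} (h0 : 0 ≤ t) (h1 : t ≤ 1) : 0 ≤ hfun t ∧ hfun t ≤ 1 := by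
  by_cases h : 3/4 < t ∧ t < 1
  · obtain ⟨m1, m2⟩ := hfun_mem_br h.1 h.2
    constructor <;> linarith
  · rw [hfun, if_neg h]; exact ⟨h0, h1⟩

lemma hinvfun_mem {t : ℝ} (h0 : 0 ≤ t) (h1 : t ≤ 1) : 0 ≤ hinvfun t ∧ hinvfun t ≤ 1 := by
  by_cases h : 3/4 < t ∧ t < 1
  · obtain ⟨m1, m2⟩ := hinvfun_mem_br h.1 h.2
    constructor <;> linarith
  · rw [hinvfun, if_neg h]; exact ⟨h0, h1⟩

-- branch lemmas for the generators
lemma x0fun_1 {t : ℝ} (h : t ≤ 1/4) : x0fun t = 2*t := by rw [x0fun, if_pos h]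
lemma x0fun_2 {t : ℝ} (h1 : 1/4 < t) (h2 : t ≤ 1/2) : x0fun t = t + 1/4 := by
  rw [x0fun, if_neg (by linarith), if_pos h2]
lemma x0fun_3 {t : ℝ} (h : 1/2 < t) : x0fun t = t/2 + 1/2 := by
  rw [x0fun, if_neg (by linarith), if_neg (by linarith)]
lemma x1fun_1 {t : ℝ} (h : t ≤ 1/2) : x1fun t = t := by rw [x1fun, if_pos h]
lemma x1fun_2 {t : ℝ} (h1 : 1/2 < t) (h2 : t ≤ 5/8) : x1fun t = 2*t - 1/2 := by
  rw [x1fun, if_neg (by linarith), if_pos h2]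
lemma x1fun_3 {t : ℝ} (h1 : 5/8 < t) (h2 : t ≤ 3/4) : x1fun t = t + 1/8 := by
  rw [x1fun, if_neg (by linarith), if_neg (by linarith), if_pos h2]
lemma x1fun_4 {t : ℝ} (h : 3/4 < t) : x1fun t = t/2 + 1/2 := by
  rw [x1fun, if_neg (by linarith), if_neg (by linarith), if_neg (by linarith)]
lemma x0inv_1 {t : ℝ} (h : t ≤ 1/2) : x0inv t = t/2 := by rw [x0inv, if_pos h]
lemma x0inv_2 {t : ℝ} (h1 : 1/2 < t) (h2 : t ≤ 3/4) : x0inv t = t - 1/4 := by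
  rw [x0inv, if_neg (by linarith), if_pos h2]
lemma x0inv_3 {t : ℝ} (h : 3/4 < t) : x0inv t = 2*t - 1 := by
  rw [x0inv, if_neg (by linarith), if_neg (by linarith)]

lemma E0 {t : ℝ} (h0 : 0 ≤ t) (h1 : t ≤ 1) :
    hfun (x0fun (x1fun t)) = x0fun (hfun t) := by
  rcases le_or_gt t (1/4) with c1 | c1
  · rw [x1fun_1 (by linarith), x0fun_1 c1, hfun_id (Or.inl (by linarith)),
      hfun_id (Or.inl (by linarith)), x0fun_1 c1]
  · rcases le_or_gt t (1/2) with c2 | c2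
    · rw [x1fun_1 c2, x0fun_2 c1 c2, hfun_id (Or.inl (by linarith)),
        hfun_id (Or.inl (by linarith)), x0fun_2 c1 c2]
    · rcases le_or_gt t (5/8) with c3 | c3
      · rw [x1fun_2 c2 c3, x0fun_3 (by linarith), hfun_br (by linarith) (by linarith),
          show 1 - ((2*t - 1/2)/2 + 1/2) = 3/4 - t by ring,
          hb_base_A (by linarith) (by linarith),
          hfun_id (Or.inl (by linarith)), x0fun_3 c2]
        ring
      · rcases le_or_gt t (3/4) with c4 | c4
        · rw [x1fun_3 c3 c4, x0fun_3 (by linarith), hfun_br (by linarith) (by linarith),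
            show 1 - ((t + 1/8)/2 + 1/2) = 7/16 - t/2 by ring,
            hb_base_B (by linarith) (by linarith),
            hfun_id (Or.inl (by linarith)), x0fun_3 c2]
          ring
        · rcases lt_or_ge t 1 with c5 | c5
          · have hbp := hb_pos (u := 1 - t) (by linarith) (by linarith)
            have hbl := hb_lt (u := 1 - t) (by linarith) (by linarith)
            rw [x1fun_4 c4, x0fun_3 (by linarith), hfun_br (by linarith) (by linarith),
              show 1 - ((t/2 + 1/2)/2 + 1/2) = (1 - t)/4 by ring,
              hb_quarter (by linarith) (by linarith), hfun_br c4 c5,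
              x0fun_3 (show 1/2 < 1 - hb (1-t) by linarith)]
            ring
          · have ht : t = 1 := le_antisymm h1 c5
            subst ht
            have e1 : x1fun 1 = 1 := by rw [x1fun_4 (by norm_num)]; norm_num
            have e0 : x0fun 1 = 1 := by rw [x0fun_3 (by norm_num)]; norm_num
            have eh : hfun 1 = 1 := hfun_id (Or.inr le_rfl)
            rw [e1, e0, eh, e0]

lemma E1 {t : ℝ} (h0 : 0 ≤ t) (h1 : t ≤ 1) :
    hfun (x0fun (x1fun (x0inv (x1fun t)))) = x1fun (hfun t) := by
  rcases le_or_gt t (1/2) with c1 | c1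
  · rw [x1fun_1 c1, x0inv_1 c1, x1fun_1 (by linarith), x0fun_1 (by linarith),
      show 2*(t/2) = t by ring, hfun_id (Or.inl (by linarith)), x1fun_1 c1]
  · rcases le_or_gt t (5/8) with c2 | c2
    · rw [x1fun_2 c1 c2, x0inv_2 (by linarith) (by linarith),
        show 2*t - 1/2 - 1/4 = 2*t - 3/4 by ring,
        x1fun_1 (by linarith), x0fun_2 (by linarith) (by linarith),
        show 2*t - 3/4 + 1/4 = 2*t - 1/2 by ring,
        hfun_id (Or.inl (by linarith)), hfun_id (Or.inl (by linarith)), x1fun_2 c1 c2]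
    · rcases le_or_gt t (11/16) with c3 | c3
      · rw [x1fun_3 c2 (by linarith), x0inv_3 (by linarith),
          show 2*(t + 1/8) - 1 = 2*t - 3/4 by ring,
          x1fun_2 (by linarith) (by linarith),
          show 2*(2*t - 3/4) - 1/2 = 4*t - 2 by ring,
          x0fun_3 (by linarith), hfun_br (by linarith) (by linarith),
          show 1 - ((4*t - 2)/2 + 1/2) = 3/2 - 2*t by ring,
          hb_base_A (by linarith) (by linarith),
          hfun_id (Or.inl (by linarith)), x1fun_3 c2 (by linarith)]
        ring
      · rcases le_or_gt t (3/4) with c4 | c4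
        · rw [x1fun_3 (by linarith) c4, x0inv_3 (by linarith),
            show 2*(t + 1/8) - 1 = 2*t - 3/4 by ring,
            x1fun_3 (by linarith) (by linarith),
            show 2*t - 3/4 + 1/8 = 2*t - 5/8 by ring,
            x0fun_3 (by linarith), hfun_br (by linarith) (by linarith),
            show 1 - ((2*t - 5/8)/2 + 1/2) = 13/16 - t by ring,
            hb_base_B (by linarith) (by linarith),
            hfun_id (Or.inl (by linarith)), x1fun_3 (by linarith) c4]
          ring
        · rcases lt_or_ge t 1 with c5 | c5
          · have hbp := hb_pos (u := 1 - t) (by linarith) (by linarith)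
            have hbl := hb_lt (u := 1 - t) (by linarith) (by linarith)
            rw [x1fun_4 c4, x0inv_3 (by linarith),
              show 2*(t/2 + 1/2) - 1 = t by ring,
              x1fun_4 c4, x0fun_3 (by linarith), hfun_br (by linarith) (by linarith),
              show 1 - ((t/2 + 1/2)/2 + 1/2) = (1 - t)/4 by ring,
              hb_quarter (by linarith) (by linarith), hfun_br c4 c5,
              x1fun_4 (show 3/4 < 1 - hb (1-t) by linarith)]
            ring
          · have ht : t = 1 := le_antisymm h1 c5
            subst ht
            have e1 : x1fun 1 = 1 := by rw [x1fun_4 (by norm_num)]; norm_num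
            have e0 : x0fun 1 = 1 := by rw [x0fun_3 (by norm_num)]; norm_num
            have einv : x0inv 1 = 1 := by rw [x0inv_3 (by norm_num)]; norm_num
            have eh : hfun 1 = 1 := hfun_id (Or.inr le_rfl)
            rw [e1, einv, e1, e0, eh, e1]

def Hperm : Equiv.Perm I where
  toFun t := ⟨hfun t.1, by
    obtain ⟨a, b⟩ := hfun_mem t.2.1 t.2.2
    exact ⟨a, b⟩⟩
  invFun t := ⟨hinvfun t.1, by
    obtain ⟨a, b⟩ := hinvfun_mem t.2.1 t.2.2
    exact ⟨a, b⟩⟩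
  left_inv t := Subtype.ext (hinvfun_hfun t.1)
  right_inv t := Subtype.ext (hfun_hinvfun t.1)

lemma xzero : x 0 = x₀ := by simp [x]
lemma xone : x 1 = x₁ := by simp [x]
lemma xtwo : x 2 = x₀ * x₁ * x₀⁻¹ := by simp [x]

lemma key0 : Hperm * (x 2 * x 0) = x 0 * Hperm := by
  rw [xzero, xtwo, show x₀ * x₁ * x₀⁻¹ * x₀ = x₀ * x₁ by group]
  apply Equiv.ext
  intro t
  apply Subtype.ext
  show hfun (x0fun (x1fun t.1)) = x0fun (hfun t.1)
  exact E0 t.2.1 t.2.2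

lemma key1 : Hperm * (x 2 * x 1) = x 1 * Hperm := by
  rw [xone, xtwo]
  apply Equiv.ext
  intro t
  apply Subtype.ext
  show hfun (x0fun (x1fun (x0inv (x1fun t.1)))) = x1fun (hfun t.1)
  exact E1 t.2.1 t.2.2

lemma hconj0 : (MulAut.conj Hperm⁻¹) (x 0) = x 2 * x 0 := by
  rw [MulAut.conj_apply, inv_inv, mul_assoc, ← key0, ← mul_assoc, inv_mul_cancel, one_mul]

lemma hconj1 : (MulAut.conj Hperm⁻¹) (x 1) = x 2 * x 1 := by
  rw [MulAut.conj_apply, inv_inv, mul_assoc, ← key1, ← mul_assoc, inv_mul_cancel, one_mul]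

lemma hinjconj : Function.Injective ⇑(MulAut.conj Hperm⁻¹).toMonoidHom :=
  (MulAut.conj Hperm⁻¹).injective

lemma hmapFG : Subgroup.map (MulAut.conj Hperm⁻¹).toMonoidHom F = G := by
  unfold F G
  rw [MonoidHom.map_closure, Set.image_pair]
  simp only [MulEquiv.coe_toMonoidHom, hconj0, hconj1]

/-- The map `x_0 ↦ x_0x_2`, `x_1 ↦ x_1x_2` extends to a group isomorphism from
Thompson's group `F` onto its subgroup `G = ⟨x_0x_2, x_1x_2⟩`; in particular `G ≅ F`.
(Products in the paper are written left-to-right, so the paper word `x_0x_2` is the Lean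
element `x 2 * x 0`.) -/
theorem stmt0 : ∃ ψ : ↥F ≃* ↥G,
    (ψ ⟨x 0, x_mem_F 0⟩ : Equiv.Perm I) = x 2 * x 0 ∧
    (ψ ⟨x 1, x_mem_F 1⟩ : Equiv.Perm I) = x 2 * x 1 := by
  refine ⟨(Subgroup.equivMapOfInjective F _ hinjconj).trans (MulEquiv.subgroupCongr hmapFG),
    ?_, ?_⟩
  · rw [MulEquiv.trans_apply, MulEquiv.subgroupCongr_apply,
      Subgroup.coe_equivMapOfInjective_apply, MulEquiv.coe_toMonoidHom]
    exact hconj0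
  · rw [MulEquiv.trans_apply, MulEquiv.subgroupCongr_apply,
      Subgroup.coe_equivMapOfInjective_apply, MulEquiv.coe_toMonoidHom]
    exact hconj1
end
end

section
/- Let B = x_{i_1}⋯x_{i_n} be a block such that the word x_{i_2}⋯x_{i_n} obtained by deleting its first letter is not a block (i.e. B is a minimal block). Then there exists j ∈ {2,…,n} such that i_j = i_1 + j - 1. -/
set_option maxHeartbeats 1000000

noncomputable section

/-- Let `B = x_{i_1}⋯x_{i_n}` be a block (encoded by the list `l`) such that the
word `x_{i_2}⋯x_{i_n}` obtained by deleting its first letter is not a block (`B` is a minimal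
block).  Then there exists `j ∈ {2, …, n}` with `i_j = i_1 + j - 1` (with 0-based indexing:
some `k` with `1 ≤ k < n` and `l[k] = l[0] + k`). -/
theorem stmt7 (l : List ℕ) (hB : IsBlock l) (hmin : ¬ IsBlock l.tail) :
    ∃ k, 1 ≤ k ∧ k < l.length ∧ l.getD k 0 = l.headI + k := by
  by_contra h
  push_neg at h
  apply hmin
  obtain ⟨hne, hsort, hht, hlt⟩ := hB
  match l with
  | [] => exact absurd rfl hne
  | [a] => simp at hht
  | a :: b :: s =>
    simp only [List.tail_cons]
    have hab : a ≤ b := (List.pairwise_cons.mp hsort).1 b (by simp)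
    have hba : b = a := by
      have h1 := hlt 1 (by simp)
      have h2 := h 1 (le_refl 1) (by simp)
      simp [List.getD] at h1 h2
      omega
    refine ⟨by simp, (List.pairwise_cons.mp hsort).2, ?_, ?_⟩
    · simpa [List.headI, List.getLastD_cons, hba] using hht
    · intro k hk
      have hk' : k + 1 < (a :: b :: s).length := by simpa using Nat.succ_lt_succ hk
      have h1 := hlt (k+1) hk'
      have h2 := h (k+1) (by omega) hk'
      simp only [List.getD_cons_succ, List.headI] at h1 h2 ⊢
      omega
end
end
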